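/- Let H be a complex Hilbert space and let 𝒜 be a norm-closed star-subalgebra of the algebra of bounded linear operators on H. Let P ∈ 𝒜 be an operator whose range is a closed subspace of H. Then the positive square root S = √(P*∘P) belongs to 𝒜, and there exists U ∈ 𝒜 such that P = U∘S, U∘U*∘U = U (U is a partial isometry), and the kernel of U equals the kernel of P. -/

import Mathlib

set_option linter.deprecated false


open ContinuousLinearMap in
lemma closed_range_bounded_below {H : Type*} [NormedAddCommGroup H]
    [InnerProductSpace ℂ H] [CompleteSpace H]
    (P : H →L[ℂ] H) (hran : IsClosed (Set.range P)) :
    ∃ c : ℝ, 0 < c ∧ ∀ x ∈ (LinearMap.ker (P : H →ₗ[ℂ] H))ᗮ, c * ‖x‖ ≤ ‖P x‖ := by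
  set K : Submodule ℂ H := (LinearMap.ker (P : H →ₗ[ℂ] H))ᗮ
  set f : K →L[ℂ] H := P.comp K.subtypeL with hf
  have hinj : Function.Injective f := by
    intro x y hxy
    have h : (x : H) - y ∈ LinearMap.ker (P : H →ₗ[ℂ] H) := by
      simp only [LinearMap.mem_ker, map_sub]
      simpa [f] using sub_eq_zero.mpr hxy
    have h2 : (x : H) - y ∈ K := sub_mem x.2 y.2
    have := (Submodule.mem_orthogonal _ _).mp h2 _ h
    have h0 : (x : H) - y = 0 := by
      rwa [inner_self_eq_zero (𝕜 := ℂ)] at this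
    exact Subtype.ext (sub_eq_zero.mp h0)
  have hker : CompleteSpace (LinearMap.ker (P : H →ₗ[ℂ] H)) := (ContinuousLinearMap.isClosed_ker P).completeSpace_coe
  have hrange : Set.range f = Set.range P := by
    apply Set.Subset.antisymm
    · rintro _ ⟨x, rfl⟩; exact ⟨x, rfl⟩
    · rintro _ ⟨x, rfl⟩
      have hx : (Submodule.orthogonalProjection (LinearMap.ker (P : H →ₗ[ℂ] H)) x : H) + (Submodule.orthogonalProjection (LinearMap.ker (P : H →ₗ[ℂ] H))ᗮ x : H) = x := Submodule.starProjection_add_starProjection_orthogonal (K := LinearMap.ker (P : H →ₗ[ℂ] H)) x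
      refine ⟨⟨_, (Submodule.orthogonalProjection (LinearMap.ker (P : H →ₗ[ℂ] H))ᗮ x).2⟩, ?_⟩
      have h1 : P ((Submodule.orthogonalProjection (LinearMap.ker (P : H →ₗ[ℂ] H)) x : H)) = 0 :=
        (Submodule.orthogonalProjection (LinearMap.ker (P : H →ₗ[ℂ] H)) x).2
      calc f ⟨_, (Submodule.orthogonalProjection (LinearMap.ker (P : H →ₗ[ℂ] H))ᗮ x).2⟩
          = P ((Submodule.orthogonalProjection (LinearMap.ker (P : H →ₗ[ℂ] H))ᗮ x : H)) := rfl
        _ = P ((Submodule.orthogonalProjection (LinearMap.ker (P : H →ₗ[ℂ] H)) x : H))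
              + P ((Submodule.orthogonalProjection (LinearMap.ker (P : H →ₗ[ℂ] H))ᗮ x : H)) := by rw [h1, zero_add]
        _ = P x := by rw [← map_add, hx]
  have hclo : IsClosed (Set.range f) := hrange ▸ hran
  set e := f.equivRange hinj hclo with he
  obtain ⟨C, hC⟩ : ∃ C : NNReal, AntilipschitzWith C e := ⟨_, e.antilipschitz⟩
  refine ⟨((C : ℝ) + 1)⁻¹, by positivity, fun x hx => ?_⟩
  have hb := hC.le_mul_norm (map_zero e) (⟨x, hx⟩ : K)
  have h3 : ((e ⟨x, hx⟩ : LinearMap.range (f : K →ₗ[ℂ] H)) : H) = f ⟨x, hx⟩ := by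
    rw [he, ContinuousLinearMap.coe_equivRange]; rfl
  have he2 : ‖e ⟨x, hx⟩‖ = ‖P x‖ := by
    calc ‖e ⟨x, hx⟩‖ = ‖((e ⟨x, hx⟩ : LinearMap.range (f : K →ₗ[ℂ] H)) : H)‖ := rfl
      _ = ‖f ⟨x, hx⟩‖ := by rw [h3]
      _ = ‖P x‖ := rfl
  rw [he2] at hb
  have hx' : ‖(⟨x, hx⟩ : K)‖ = ‖x‖ := rfl
  rw [hx'] at hb
  have hPn : (0:ℝ) ≤ ‖P x‖ := norm_nonneg _
  have hCn : (0:ℝ) ≤ C := C.2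
  rw [inv_mul_le_iff₀ (by positivity)]
  nlinarith


open ContinuousLinearMap in
lemma spectrum_gap {H : Type*} [NormedAddCommGroup H]
    [InnerProductSpace ℂ H] [CompleteSpace H]
    (P : H →L[ℂ] H) {c : ℝ} (hc0 : 0 < c)
    (hc : ∀ x ∈ (LinearMap.ker (P : H →ₗ[ℂ] H))ᗮ, c * ‖x‖ ≤ ‖P x‖) :
    ∀ t ∈ spectrum ℝ (adjoint P * P), t = 0 ∨ c ^ 2 ≤ t := by
  set T : H →L[ℂ] H := adjoint P * P with hTdef
  have hTsa : IsSelfAdjoint T := by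
    rw [IsSelfAdjoint, star_mul, star_eq_adjoint, star_eq_adjoint, adjoint_adjoint]
  have hsymm : ∀ x y : H, (inner ℂ (T x) y : ℂ) = inner ℂ x (T y) :=
    fun x y => (isSelfAdjoint_iff_isSymmetric (A := T)).mp hTsa x y
  have hTinner : ∀ x : H, (inner ℂ (T x) x : ℂ) = inner ℂ (P x) (P x) := by
    intro x
    rw [hTdef, ContinuousLinearMap.mul_apply]
    exact ContinuousLinearMap.adjoint_inner_left P x (P x)
  have hkerT : LinearMap.ker (T : H →ₗ[ℂ] H) = LinearMap.ker (P : H →ₗ[ℂ] H) := by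
    ext x
    simp only [LinearMap.mem_ker, ContinuousLinearMap.coe_coe]
    constructor
    · intro h
      have := hTinner x
      rw [h, inner_zero_left] at this
      exact inner_self_eq_zero.mp this.symm
    · intro h
      rw [hTdef, ContinuousLinearMap.mul_apply, h, map_zero]
  have hT0 : spectrum ℝ T ⊆ Set.Ici 0 := by
    have hpos : (0 : H →L[ℂ] H) ≤ T := by
      rw [ContinuousLinearMap.nonneg_iff_isPositive]
      have := (ContinuousLinearMap.isPositive_one (E := H) (𝕜 := ℂ)).adjoint_conj P
      simpa [hTdef, ContinuousLinearMap.mul_def, ContinuousLinearMap.one_def] using this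
    exact spectrum_nonneg_of_nonneg hpos
  intro t ht
  by_contra hcon
  push_neg at hcon
  obtain ⟨ht0, htc⟩ := hcon
  have htpos : 0 < t := lt_of_le_of_ne (hT0 ht) (Ne.symm ht0)
  -- show `algebraMap ℝ _ t - T` is a unit, contradiction
  set A : H →L[ℂ] H := algebraMap ℝ (H →L[ℂ] H) t - T with hA
  have hAapp : ∀ x, A x = (t : ℂ) • x - T x := by
    intro x
    rw [hA, ContinuousLinearMap.sub_apply, Algebra.algebraMap_eq_smul_one]
    simp [ContinuousLinearMap.smul_apply]
  have hAsymm : ∀ x y : H, (inner ℂ (A x) y : ℂ) = inner ℂ x (A y) := by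
    intro x y
    rw [hAapp, hAapp, inner_sub_left, inner_sub_right, hsymm x y, inner_smul_left, inner_smul_right]
    norm_num
  set m := min t (c ^ 2 - t) with hm
  have hmpos : 0 < m := lt_min htpos (by linarith)
  have hbound : ∀ x, m * ‖x‖ ≤ ‖A x‖ := by
    intro x
    set y : H := (Submodule.orthogonalProjection (LinearMap.ker (P : H →ₗ[ℂ] H)) x : H) with hy
    set z : H := x - y with hz
    have hymem : y ∈ LinearMap.ker (P : H →ₗ[ℂ] H) := (Submodule.orthogonalProjection (LinearMap.ker (P : H →ₗ[ℂ] H)) x).2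
    have hzmem : z ∈ (LinearMap.ker (P : H →ₗ[ℂ] H))ᗮ := Submodule.sub_starProjection_mem_orthogonal x
    have hxyz : x = y + z := by rw [hz]; abel
    have hTy : T y = 0 := by rw [← ContinuousLinearMap.coe_coe, ← LinearMap.mem_ker, hkerT]; exact hymem
    have hAy : A y = (t : ℂ) • y := by rw [hAapp, hTy, sub_zero]
    have hTz_mem : T z ∈ (LinearMap.ker (P : H →ₗ[ℂ] H))ᗮ := by
      intro u hu
      have hTu : T u = 0 := by rw [← ContinuousLinearMap.coe_coe, ← LinearMap.mem_ker, hkerT]; exact hu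
      rw [← hsymm u z, hTu, inner_zero_left]
    have hAz_mem : A z ∈ (LinearMap.ker (P : H →ₗ[ℂ] H))ᗮ := by
      rw [hAapp]
      exact sub_mem (Submodule.smul_mem _ _ hzmem) hTz_mem
    have hAy_mem : A y ∈ LinearMap.ker (P : H →ₗ[ℂ] H) := by
      rw [hAy]; exact Submodule.smul_mem _ _ hymem
    have hinner0 : (inner ℂ (A y) (A z) : ℂ) = 0 :=
      hAz_mem _ hAy_mem
    have hx_inner0 : (inner ℂ y z : ℂ) = 0 := hzmem _ hymem
    have hnormx : ‖x‖ ^ 2 = ‖y‖ ^ 2 + ‖z‖ ^ 2 := by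
      rw [hxyz, pow_two, pow_two, pow_two]
      exact norm_add_sq_eq_norm_sq_add_norm_sq_of_inner_eq_zero y z hx_inner0
    have hnormA : ‖A x‖ ^ 2 = ‖A y‖ ^ 2 + ‖A z‖ ^ 2 := by
      rw [hxyz, map_add, pow_two, pow_two, pow_two]
      exact norm_add_sq_eq_norm_sq_add_norm_sq_of_inner_eq_zero _ _ hinner0
    have hAynorm : ‖A y‖ = t * ‖y‖ := by
      rw [hAy, norm_smul]
      simp [abs_of_pos htpos, Complex.norm_real, abs_of_nonneg htpos.le]
    have hAznorm : (c ^ 2 - t) * ‖z‖ ≤ ‖A z‖ := by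
      rcases eq_or_ne z 0 with h0 | h0
      · simp [h0]
      have hre : (Complex.re (inner ℂ (A z) z : ℂ)) = t * ‖z‖ ^ 2 - ‖P z‖ ^ 2 := by
        rw [hAapp, inner_sub_left, inner_smul_left]
        have h1 : (inner ℂ (T z) z : ℂ) = inner ℂ (P z) (P z) := hTinner z
        rw [h1, inner_self_eq_norm_sq_to_K (𝕜 := ℂ), inner_self_eq_norm_sq_to_K (𝕜 := ℂ)]
        simp [← Complex.ofReal_pow]
      have hPz : c * ‖z‖ ≤ ‖P z‖ := hc z hzmem
      have h2 : (c ^ 2 - t) * ‖z‖ ^ 2 ≤ -(Complex.re (inner ℂ (A z) z : ℂ)) := by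
        rw [hre]
        have : c ^ 2 * ‖z‖ ^ 2 ≤ ‖P z‖ ^ 2 := by
          have := mul_self_le_mul_self (by positivity) hPz
          nlinarith [norm_nonneg z]
        nlinarith
      have h3 : -(Complex.re (inner ℂ (A z) z : ℂ)) ≤ ‖A z‖ * ‖z‖ := by
        calc -(Complex.re (inner ℂ (A z) z : ℂ)) ≤ ‖(inner ℂ (A z) z : ℂ)‖ := by
              exact neg_le_abs _ |>.trans (Complex.abs_re_le_norm _)
          _ ≤ ‖A z‖ * ‖z‖ := norm_inner_le_norm _ _
      have hznorm : 0 < ‖z‖ := norm_pos_iff.mpr h0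
      nlinarith
    have hAy2 : m * ‖y‖ ≤ ‖A y‖ := by
      rw [hAynorm]
      exact mul_le_mul_of_nonneg_right (min_le_left _ _) (norm_nonneg _)
    have hAz2 : m * ‖z‖ ≤ ‖A z‖ := by
      refine le_trans ?_ hAznorm
      exact mul_le_mul_of_nonneg_right (min_le_right _ _) (norm_nonneg _)
    have q1 : (m * ‖y‖) ^ 2 ≤ ‖A y‖ ^ 2 :=
      pow_le_pow_left₀ (by positivity) hAy2 2
    have q2 : (m * ‖z‖) ^ 2 ≤ ‖A z‖ ^ 2 :=
      pow_le_pow_left₀ (by positivity) hAz2 2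
    have h4 : (m * ‖x‖) ^ 2 ≤ ‖A x‖ ^ 2 := by
      have e1 : (m * ‖x‖) ^ 2 = (m * ‖y‖) ^ 2 + (m * ‖z‖) ^ 2 := by
        rw [mul_pow, mul_pow, mul_pow, hnormx]; ring
      rw [e1, hnormA]
      exact add_le_add q1 q2
    exact le_of_pow_le_pow_left₀ two_ne_zero (norm_nonneg _) h4
  have hanti : AntilipschitzWith (⟨m⁻¹, by positivity⟩ : NNReal) A := by
    apply ContinuousLinearMap.antilipschitz_of_bound
    intro x
    change ‖x‖ ≤ m⁻¹ * ‖A x‖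
    rw [inv_mul_eq_div, le_div_iff₀ hmpos, mul_comm]
    exact hbound x
  have hdense : (LinearMap.range (A : H →ₗ[ℂ] H)).topologicalClosure = ⊤ := by
    rw [Submodule.topologicalClosure_eq_top_iff]
    rw [Submodule.eq_bot_iff]
    intro v hv
    have hAv : A v = 0 := by
      have h5 : ∀ x : H, (inner ℂ x (A v) : ℂ) = 0 := by
        intro x
        rw [← hAsymm x v]
        exact (Submodule.mem_orthogonal _ v).mp hv (A x) (LinearMap.mem_range_self _ x)
      exact inner_self_eq_zero.mp (h5 (A v))
    have := hbound v
    rw [hAv, norm_zero] at this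
    have : ‖v‖ ≤ 0 := by nlinarith
    exact norm_le_zero_iff.mp this
  have hbij : Function.Bijective A :=
    (ContinuousLinearMap.bijective_iff_dense_range_and_antilipschitz A).mpr
      ⟨hdense, ⟨_, hanti⟩⟩
  have hunit : IsUnit A := ContinuousLinearMap.isUnit_iff_bijective.mpr hbij
  exact (spectrum.mem_iff.mp ht) hunit


section helpers

open ContinuousLinearMap in
lemma cfc_mem_closed_starSubalgebra {H : Type*} [NormedAddCommGroup H]
    [InnerProductSpace ℂ H] [CompleteSpace H]
    (𝒜 : StarSubalgebra ℂ (H →L[ℂ] H)) (h𝒜closed : IsClosed (𝒜 : Set (H →L[ℂ] H)))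
    (T : H →L[ℂ] H) (hT : T ∈ 𝒜) (hTsa : IsSelfAdjoint T)
    (f : ℝ → ℝ) (hf : Continuous f) : cfc f T ∈ 𝒜 := by
  rw [cfc_real_eq_complex f hTsa]
  have hn : IsStarNormal T := hTsa.isStarNormal
  have hcont : ContinuousOn (fun x : ℂ => (f x.re : ℂ)) (spectrum ℂ T) :=
    Continuous.continuousOn (by continuity)
  rw [cfc_apply (fun x : ℂ => (f x.re : ℂ)) T hn hcont, cfcHom_eq_of_isStarNormal]
  exact StarAlgebra.elemental.le_of_mem h𝒜closed hT (SetLike.coe_mem _)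

end helpers

set_option maxHeartbeats 1000000 in
open ContinuousLinearMap in
theorem polar_decomposition_aux {H : Type*} [NormedAddCommGroup H]
    [InnerProductSpace ℂ H] [CompleteSpace H]
    (𝒜 : StarSubalgebra ℂ (H →L[ℂ] H)) (h𝒜closed : IsClosed (𝒜 : Set (H →L[ℂ] H)))
    (P : H →L[ℂ] H) (hP : P ∈ 𝒜) (hran : IsClosed (Set.range P))
    {c : ℝ} (hc0 : 0 < c)
    (hc : ∀ x ∈ (LinearMap.ker (P : H →ₗ[ℂ] H))ᗮ, c * ‖x‖ ≤ ‖P x‖)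
    (hgap' : ∀ t ∈ spectrum ℝ (adjoint P * P), t = 0 ∨ c ^ 2 ≤ t) :
    ∃ S : H →L[ℂ] H, S.IsPositive ∧ S * S = ContinuousLinearMap.adjoint P * P ∧
      S ∈ 𝒜 ∧ ∃ U ∈ 𝒜, P = U * S ∧ U * ContinuousLinearMap.adjoint U * U = U ∧
        LinearMap.ker (U : H →ₗ[ℂ] H) = LinearMap.ker (P : H →ₗ[ℂ] H) := by
  set T : H →L[ℂ] H := adjoint P * P with hTdef
  have hgap : ∀ t ∈ spectrum ℝ T, t = 0 ∨ c ^ 2 ≤ t := hgap'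
  have hTsa : IsSelfAdjoint T := by
    rw [IsSelfAdjoint, star_mul, star_eq_adjoint, star_eq_adjoint, adjoint_adjoint]
  have hTpos : (0 : H →L[ℂ] H) ≤ T := by
    rw [ContinuousLinearMap.nonneg_iff_isPositive]
    simpa [hTdef, ContinuousLinearMap.mul_def, ContinuousLinearMap.one_def] using
      (ContinuousLinearMap.isPositive_one (E := H) (𝕜 := ℂ)).adjoint_conj P
  have hT𝒜 : T ∈ 𝒜 := mul_mem (by rw [← star_eq_adjoint]; exact star_mem hP) hP
  have hσ0 : spectrum ℝ T ⊆ Set.Ici 0 := spectrum_nonneg_of_nonneg hTpos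
  have hTinner : ∀ x : H, (inner ℂ (T x) x : ℂ) = inner ℂ (P x) (P x) := by
    intro x
    rw [hTdef, ContinuousLinearMap.mul_apply]
    exact ContinuousLinearMap.adjoint_inner_left P x (P x)
  have hkerT : LinearMap.ker (T : H →ₗ[ℂ] H) = LinearMap.ker (P : H →ₗ[ℂ] H) := by
    ext x
    simp only [LinearMap.mem_ker, ContinuousLinearMap.coe_coe]
    constructor
    · intro h
      have := hTinner x
      rw [h, inner_zero_left] at this
      exact inner_self_eq_zero.mp this.symm
    · intro h
      rw [hTdef, ContinuousLinearMap.mul_apply, h, map_zero]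
  -- the square root
  set S := cfc Real.sqrt T with hSdef
  have hSpos : (0 : H →L[ℂ] H) ≤ S := cfc_nonneg fun x _ => Real.sqrt_nonneg x
  have hSS : S * S = T := by
    rw [hSdef, ← cfc_mul Real.sqrt Real.sqrt T
      Real.continuous_sqrt.continuousOn Real.continuous_sqrt.continuousOn,
      cfc_congr (fun x hx => Real.mul_self_sqrt (hσ0 hx)), cfc_id' ℝ T]
  have hS𝒜 : S ∈ 𝒜 :=
    cfc_mem_closed_starSubalgebra 𝒜 h𝒜closed T hT𝒜 hTsa Real.sqrt Real.continuous_sqrt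
  -- the function g
  set g : ℝ → ℝ := fun t => (Real.sqrt (max t (c ^ 2)))⁻¹ with hgdef
  have hmaxpos : ∀ t : ℝ, 0 < Real.sqrt (max t (c ^ 2)) := fun t =>
    Real.sqrt_pos.mpr (lt_of_lt_of_le (by positivity) (le_max_right _ _))
  have hgc : Continuous g :=
    (Real.continuous_sqrt.comp (continuous_id.max continuous_const)).inv₀
      fun t => ne_of_gt (hmaxpos t)
  set G := cfc g T with hGdef
  have hG𝒜 : G ∈ 𝒜 := cfc_mem_closed_starSubalgebra 𝒜 h𝒜closed T hT𝒜 hTsa g hgc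
  have hGsa : IsSelfAdjoint G := cfc_predicate g T
  set U := P * G with hUdef
  have hU𝒜 : U ∈ 𝒜 := mul_mem hP hG𝒜
  have hidc : Continuous fun t : ℝ => t := continuous_id
  have hgsq : Continuous fun t => g t * Real.sqrt t := hgc.mul Real.continuous_sqrt
  have hgg : Continuous fun t => g t * g t := hgc.mul hgc
  have hggt : Continuous fun t => g t * g t * t := hgg.mul hidc
  have hgggt : Continuous fun t => g t * g t * t * g t := hggt.mul hgc
  have htgc : Continuous fun t => t * g t := hidc.mul hgc
  -- key vanishing lemma
  have key : ∀ k : ℝ → ℝ, Continuous k → (∀ t ∈ spectrum ℝ T, t * k t = 0) →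
      P * cfc k T = 0 := by
    intro k hk hkt
    have h1 : T * cfc k T = 0 := by
      have e : cfc (fun x : ℝ => x * k x) T
          = cfc (fun x : ℝ => x) T * cfc k T :=
        cfc_mul (fun x : ℝ => x) k T hidc.continuousOn hk.continuousOn
      rw [cfc_id' ℝ T] at e
      rw [← e, cfc_congr (fun x hx => hkt x hx), cfc_const 0 T, map_zero]
    ext x
    have h2 : T (cfc k T x) = 0 := by
      have : (T * cfc k T) x = 0 := by rw [h1]; rfl
      rwa [ContinuousLinearMap.mul_apply] at this
    have h3 : cfc k T x ∈ LinearMap.ker (P : H →ₗ[ℂ] H) := hkerT ▸ LinearMap.mem_ker.mpr h2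
    simpa [ContinuousLinearMap.mul_apply] using h3
  -- commutation
  have eTG : cfc (fun t : ℝ => t * g t) T = T * G := by
    have e : cfc (fun t : ℝ => t * g t) T = cfc (fun t : ℝ => t) T * cfc g T :=
      cfc_mul (fun t : ℝ => t) g T hidc.continuousOn hgc.continuousOn
    rw [cfc_id' ℝ T] at e
    rw [e, hGdef]
  have eGT : cfc (fun t : ℝ => t * g t) T = G * T := by
    have : cfc (fun t : ℝ => g t * t) T = G * cfc (fun t : ℝ => t) T :=
      cfc_mul g (fun t : ℝ => t) T hgc.continuousOn hidc.continuousOn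
    rw [cfc_id' ℝ T] at this
    rw [← this]
    exact cfc_congr fun x _ => mul_comm x (g x)
  have hcomm : T * G = G * T := by rw [← eTG, eGT]
  refine ⟨S, (ContinuousLinearMap.nonneg_iff_isPositive S).mp hSpos, hSS, hS𝒜,
    U, hU𝒜, ?_, ?_, ?_⟩
  · -- P = U * S
    have eGS : G * S = cfc (fun t => g t * Real.sqrt t) T := by
      rw [hGdef, hSdef, ← cfc_mul g Real.sqrt T hgc.continuousOn
        Real.continuous_sqrt.continuousOn]
    have hzero : P * cfc (fun t => g t * Real.sqrt t - 1) T = 0 := by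
      apply key _ (hgsq.sub continuous_const)
      intro t ht
      rcases hgap t ht with h | h
      · simp [h]
      · have htpos : 0 < t := lt_of_lt_of_le (by positivity) h
        have : g t * Real.sqrt t = 1 := by
          rw [hgdef]
          simp only [max_eq_left h]
          exact inv_mul_cancel₀ (ne_of_gt (Real.sqrt_pos.mpr htpos))
        show t * (g t * Real.sqrt t - 1) = 0
        rw [this, sub_self, mul_zero]
    have : P * (cfc (fun t => g t * Real.sqrt t) T - 1) = 0 := by
      rw [show cfc (fun t => g t * Real.sqrt t) T - 1
          = cfc (fun t => g t * Real.sqrt t - 1) T by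
        rw [cfc_sub (fun t => g t * Real.sqrt t) (fun _ => 1) T
          hgsq.continuousOn continuousOn_const, cfc_const 1 T, map_one]]
      exact hzero
    rw [mul_sub, mul_one, sub_eq_zero] at this
    rw [hUdef, mul_assoc, eGS]
    exact this.symm
  · -- partial isometry
    have hstarU : adjoint U = G * adjoint P := by
      rw [← star_eq_adjoint, ← star_eq_adjoint, hUdef, star_mul, hGsa.star_eq]
    have eGG : G * G = cfc (fun t => g t * g t) T :=
      (cfc_mul g g T hgc.continuousOn hgc.continuousOn).symm
    have eGGT : G * G * T = cfc (fun t => g t * g t * t) T := by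
      have := cfc_mul (fun t => g t * g t) (fun t : ℝ => t) T
        hgg.continuousOn hidc.continuousOn
      rw [cfc_id' ℝ T, ← eGG] at this
      exact this.symm
    have eGGTG : G * G * T * G = cfc (fun t => g t * g t * t * g t) T := by
      have := cfc_mul (fun t => g t * g t * t) g T
        hggt.continuousOn hgc.continuousOn
      rw [← eGGT] at this
      exact this.symm
    have hrearr : U * adjoint U * U = P * (G * G * T * G) := by
      rw [hUdef, hstarU, hTdef]
      simp only [mul_assoc]
    have hzero : P * cfc (fun t => g t * g t * t * g t - g t) T = 0 := by
      apply key _ (hgggt.sub hgc)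
      intro t ht
      rcases hgap t ht with h | h
      · simp [h]
      · have htpos : 0 < t := lt_of_lt_of_le (by positivity) h
        have hmax : max t (c ^ 2) = t := max_eq_left h
        have hsq : Real.sqrt t * Real.sqrt t = t := Real.mul_self_sqrt htpos.le
        have hsne : Real.sqrt t ≠ 0 := ne_of_gt (Real.sqrt_pos.mpr htpos)
        have : g t * g t * t * g t - g t = 0 := by
          rw [hgdef]
          simp only [hmax]
          field_simp
          rw [Real.sq_sqrt htpos.le]; ring
        show t * (g t * g t * t * g t - g t) = 0
        rw [this, mul_zero]
    have : P * (cfc (fun t => g t * g t * t * g t) T - G) = 0 := by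
      rw [show cfc (fun t => g t * g t * t * g t) T - G
          = cfc (fun t => g t * g t * t * g t - g t) T by
        rw [cfc_sub (fun t => g t * g t * t * g t) g T
          hgggt.continuousOn hgc.continuousOn, hGdef]]
      exact hzero
    rw [mul_sub, sub_eq_zero] at this
    rw [hrearr, eGGTG, this]
  · -- kernels
    set n : ℝ → ℝ := fun t => Real.sqrt (max t (c ^ 2)) with hndef
    have hnc : Continuous n := Real.continuous_sqrt.comp (continuous_id.max continuous_const)
    have hng : ∀ t, n t * (t * g t) = t := by
      intro t
      rw [hndef, hgdef]
      have := hmaxpos t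
      field_simp
    have eT : cfc n T * (T * G) = T := by
      rw [← eTG, ← cfc_mul n _ T hnc.continuousOn htgc.continuousOn]
      calc cfc (fun t => n t * (t * g t)) T = cfc (fun t : ℝ => t) T :=
            cfc_congr fun x _ => hng x
        _ = T := cfc_id' ℝ T
    ext x
    simp only [LinearMap.mem_ker, ContinuousLinearMap.coe_coe]
    constructor
    · intro hx
      have hGx : G x ∈ LinearMap.ker (P : H →ₗ[ℂ] H) := by
        rw [← ContinuousLinearMap.coe_coe, ← LinearMap.mem_ker] at hx
        have : P (G x) = 0 := by
          have := hx
          simpa [hUdef, ContinuousLinearMap.mul_apply] using this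
        exact LinearMap.mem_ker.mpr this
      have hTGx : T (G x) = 0 := by
        have : G x ∈ LinearMap.ker (T : H →ₗ[ℂ] H) := hkerT ▸ hGx
        exact LinearMap.mem_ker.mp this
      have hTx : T x = 0 := by
        have e1 : T x = cfc n T ((T * G) x) := by
          conv_lhs => rw [← eT]
          rfl
        rw [e1, ContinuousLinearMap.mul_apply, hTGx, map_zero]
      have : x ∈ LinearMap.ker (T : H →ₗ[ℂ] H) := LinearMap.mem_ker.mpr hTx
      rw [hkerT] at this
      exact LinearMap.mem_ker.mp this
    · intro hx
      have hTx : T x = 0 := by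
        have : x ∈ LinearMap.ker (T : H →ₗ[ℂ] H) := hkerT ▸ LinearMap.mem_ker.mpr hx
        exact LinearMap.mem_ker.mp this
      have hTGx : T (G x) = 0 := by
        have : (T * G) x = (G * T) x := by rw [hcomm]
        rw [ContinuousLinearMap.mul_apply] at this
        rw [this, ContinuousLinearMap.mul_apply, hTx, map_zero]
      have hGx : G x ∈ LinearMap.ker (P : H →ₗ[ℂ] H) := hkerT ▸ LinearMap.mem_ker.mpr hTGx
      simpa [hUdef, ContinuousLinearMap.mul_apply] using LinearMap.mem_ker.mp hGx

/-- **Polar decomposition in a C*-subalgebra** (Lemma on polar decomposition).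
Let `𝒜` be a norm-closed star-subalgebra of the bounded operators on a complex Hilbert
space `H` and let `P ∈ 𝒜` have closed range. Then the positive square root
`S = √(P*P)` (the unique positive operator with `S² = P*P`) belongs to `𝒜`, and there is
a `U ∈ 𝒜` with `P = U∘S`, `U` a partial isometry (`U U* U = U`), and `ker U = ker P`. -/
theorem polar_decomposition_in_cstar_subalgebra {H : Type*} [NormedAddCommGroup H]
    [InnerProductSpace ℂ H] [CompleteSpace H]
    (𝒜 : StarSubalgebra ℂ (H →L[ℂ] H)) (h𝒜closed : IsClosed (𝒜 : Set (H →L[ℂ] H)))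
    (P : H →L[ℂ] H) (hP : P ∈ 𝒜) (hran : IsClosed (Set.range P)) :
    ∃ S : H →L[ℂ] H, S.IsPositive ∧ S * S = ContinuousLinearMap.adjoint P * P ∧
      S ∈ 𝒜 ∧ ∃ U ∈ 𝒜, P = U * S ∧ U * ContinuousLinearMap.adjoint U * U = U ∧
        LinearMap.ker (U : H →ₗ[ℂ] H) = LinearMap.ker (P : H →ₗ[ℂ] H) := by
  obtain ⟨c, hc0, hc⟩ := closed_range_bounded_below P hran
  exact polar_decomposition_aux 𝒜 h𝒜closed P hP hran hc0 hc (spectrum_gap P hc0 hc)
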